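/- Let K be an idempotent semifield and A : Matrix (Fin n) (Fin n) K. Then per(A) ≠ 0 if and only if there exists a matrix S : Matrix (Fin n) (Fin n) K with S invertible (IsUnit S in the matrix semiring) and S ≤ A entrywise for the canonical order, i.e., S i j + A i j = A i j for all i j. Equivalently, per(A) ≠ 0 if and only if there exists a permutation σ : Equiv.Perm (Fin n) with A i (σ i) ≠ 0 for all i. -/

import Mathlib

section aux
variable {K : Type*} [Semifield K] (hidem : ∀ a : K, a + a = a)

lemma zsf (hidem : ∀ a : K, a + a = a) {a b : K} (h : a + b = 0) : a = 0 := by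
  have : a + (a + b) = a + b := by rw [← add_assoc, hidem]
  rw [h, add_zero] at this
  exact this

lemma sum_eq_zero_forall (hidem : ∀ a : K, a + a = a) {ι : Type*} (s : Finset ι) (f : ι → K)
    (h : ∑ x ∈ s, f x = 0) : ∀ x ∈ s, f x = 0 := by
  induction s using Finset.cons_induction with
  | empty => simp
  | cons a s ha ih =>
    rw [Finset.sum_cons] at h
    have h1 : f a = 0 := zsf hidem h
    have h2 : ∑ x ∈ s, f x = 0 := by
      rw [add_comm] at h; exact zsf hidem h
    intro x hx
    rcases Finset.mem_cons.mp hx with rfl | hx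
    · exact h1
    · exact ih h2 x hx

end aux

theorem permanent_ne_zero_iff {K : Type*} [Semifield K]
    (hidem : ∀ a : K, a + a = a) {n : ℕ} (A : Matrix (Fin n) (Fin n) K) :
    ((∑ σ : Equiv.Perm (Fin n), ∏ i, A i (σ i)) ≠ 0 ↔
      ∃ S : Matrix (Fin n) (Fin n) K, IsUnit S ∧ ∀ i j, S i j + A i j = A i j) ∧
    ((∑ σ : Equiv.Perm (Fin n), ∏ i, A i (σ i)) ≠ 0 ↔
      ∃ σ : Equiv.Perm (Fin n), ∀ i, A i (σ i) ≠ 0) := by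
  have key : (∑ σ : Equiv.Perm (Fin n), ∏ i, A i (σ i)) ≠ 0 ↔
      ∃ σ : Equiv.Perm (Fin n), ∀ i, A i (σ i) ≠ 0 := by
    constructor
    · intro h
      by_contra hc
      push_neg at hc
      apply h
      apply Finset.sum_eq_zero
      intro σ _
      obtain ⟨i, hi⟩ := hc σ
      exact Finset.prod_eq_zero (Finset.mem_univ i) hi
    · rintro ⟨σ, hσ⟩ h
      have := sum_eq_zero_forall hidem Finset.univ _ h σ (Finset.mem_univ σ)
      rw [Finset.prod_eq_zero_iff] at this
      obtain ⟨i, _, hi⟩ := this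
      exact hσ i hi
  refine ⟨key.trans ?_, key⟩
  constructor
  · rintro ⟨σ, hσ⟩
    set S : Matrix (Fin n) (Fin n) K := fun i j => if j = σ i then A i (σ i) else 0 with hS
    set T : Matrix (Fin n) (Fin n) K := fun i j => if i = σ j then (A j (σ j))⁻¹ else 0 with hT
    have hST : S * T = 1 := by
      ext i j
      rw [Matrix.mul_apply]; simp only [hS, hT, ite_mul, zero_mul, mul_ite, mul_zero]
      by_cases hij : i = j
      · subst hij
        rw [Finset.sum_eq_single (σ i)]
        · simp [mul_inv_cancel₀ (hσ i)]
        · intro b _ hb; simp [hb]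
        · simp
      · have hne : σ i ≠ σ j := fun e => hij (σ.injective e)
        rw [Finset.sum_eq_zero]
        · simp [Matrix.one_apply, hij]
        · intro b _
          by_cases h1 : b = σ i
          · subst h1; simp [hne]
          · simp [h1]
    have hTS : T * S = 1 := by
      ext i j
      rw [Matrix.mul_apply]; simp only [hS, hT, ite_mul, zero_mul, mul_ite, mul_zero]
      by_cases hij : i = j
      · subst hij
        rcases σ.surjective i with ⟨k, rfl⟩
        rw [Finset.sum_eq_single k]
        · simp [inv_mul_cancel₀ (hσ k)]
        · intro b _ hb
          have : σ k ≠ σ b := fun e => hb (σ.injective e).symm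
          simp [this]
        · simp
      · rw [Finset.sum_eq_zero]
        · simp [Matrix.one_apply, hij]
        · intro b _
          by_cases h1 : i = σ b
          · by_cases h2 : j = σ b
            · exact absurd (h1.trans h2.symm) hij
            · simp [h2]
          · simp [h1]
    refine ⟨S, ⟨⟨S, T, hST, hTS⟩, rfl⟩, ?_⟩
    intro i j
    by_cases hj : j = σ i
    · subst hj; simp [hS, hidem]
    · simp [hS, hj]
  · rintro ⟨S, hU, hle⟩
    obtain ⟨⟨S', T, hST, hTS⟩, rfl⟩ := hU
    -- from S * T = 1 extract f
    have hdiag : ∀ i : Fin n, ∃ k, S' i k ≠ 0 ∧ T k i ≠ 0 := by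
      intro i
      have h1 : ∑ k, S' i k * T k i = 1 := by
        have := congrFun (congrFun hST i) i
        simpa [Matrix.mul_apply, Matrix.one_apply] using this
      by_contra hc
      push_neg at hc
      have : ∑ k, S' i k * T k i = 0 := Finset.sum_eq_zero (by
        intro k _
        rcases eq_or_ne (S' i k) 0 with h | h
        · simp [h]
        · simp [hc k h])
      rw [h1] at this
      exact one_ne_zero this
    have hoff : ∀ i j : Fin n, i ≠ j → ∀ k, S' i k * T k j = 0 := by
      intro i j hij k
      have h0 : ∑ k, S' i k * T k j = 0 := by
        have := congrFun (congrFun hST i) j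
        simpa [Matrix.mul_apply, Matrix.one_apply, hij] using this
      exact sum_eq_zero_forall hidem Finset.univ _ h0 k (Finset.mem_univ k)
    choose f hf1 hf2 using hdiag
    have hinj : Function.Injective f := by
      intro i i' he
      by_contra hii
      have := hoff i i' hii (f i)
      rw [he] at this
      rcases mul_eq_zero.mp this with h | h
      · rw [← he] at h; exact hf1 i h
      · exact hf2 i' h
    have hbij := Finite.injective_iff_bijective.mp hinj
    refine ⟨Equiv.ofBijective f hbij, ?_⟩
    intro i
    intro hA
    have h := hle i (f i)
    have hA' : A i (f i) = 0 := hA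
    rw [hA', add_zero] at h
    exact hf1 i h
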